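/- Fix a non-compact well-ordered space J. Suppose X and X′ are J-convergence spaces such that X × X′ (with the product topology) is a J-convergence space, and q : X → Y and q′ : X′ → Y′ are quotient maps. Then the direct product q × q′ : X × X′ → Y × Y′ (both with the product topology) is a quotient map if and only if Y × Y′ is a J-convergence space. -/

import Mathlib

open Set Topology TopologicalSpace

universe u v w

/-- The order topology on `WithTop α`; for a noncompact well-ordered `α` with the order
topology, `WithTop α` with this topology is the one-point (Alexandroff) compactification
`α ∪ {∞_α}`, in which `⊤ = ∞_α` is the maximum. -/
noncomputable instance withTopOrderTopology {α : Type*} [Preorder α] :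
    TopologicalSpace (WithTop α) := Preorder.topology _

/-- `I` is almost closed in the ordered topological space `S`:
`closure I \ I = {ℓ}` where `ℓ = min {s ∈ S | I < s}`. -/
def AlmostClosedIn {S : Type*} [LinearOrder S] [TopologicalSpace S] (I : Set S) : Prop :=
  ∃ ℓ : S, closure I \ I = {ℓ} ∧ IsLeast {s : S | ∀ i ∈ I, i < s} ℓ

/-- `I ⊆ J` is almost closed in `J ∪ {∞_J}` (modeled as `WithTop J` with the order topology). -/
def AlmostClosed {J : Type*} [LinearOrder J] (I : Set J) : Prop :=
  AlmostClosedIn ((fun j : J => (j : WithTop J)) '' I)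

/-- A subset `C ⊆ X` is `J`-closed: for every almost closed `I ⊆ J` and continuous
`f : I ∪ {∞_I} → X` (where `I ∪ {∞_I} = WithTop ↥I` is the one-point compactification of
`I` with its internal order topology) with `f(I) ⊆ C` one has `f(∞_I) ∈ C`. -/
def JClosedSet (J : Type v) [LinearOrder J] (X : Type u) [TopologicalSpace X] (C : Set X) : Prop :=
  ∀ I : Set J, AlmostClosed I → ∀ f : WithTop ↥I → X, Continuous f →
    (∀ i : ↥I, f (WithTop.some i) ∈ C) → f ⊤ ∈ C

/-- `U ⊆ X` is `J`-open iff its complement is `J`-closed. -/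
def JOpenSet (J : Type v) [LinearOrder J] (X : Type u) [TopologicalSpace X] (U : Set X) : Prop :=
  JClosedSet J X Uᶜ

/-- `X` is a `J`-convergence space. -/
def IsJConvergence (J : Type v) [LinearOrder J] (X : Type u) [TopologicalSpace X] : Prop :=
  ∀ A : Set X, ¬ IsClosed A →
    ∃ I : Set J, AlmostClosed I ∧ ∃ f : WithTop ↥I → X, Continuous f ∧
      (∀ i : ↥I, f (WithTop.some i) ∈ A) ∧ f ⊤ ∉ A

/-- `JX`: the topology of `J`-open sets. -/
noncomputable def jTop (J : Type v) [LinearOrder J] (X : Type u) [tX : TopologicalSpace X] :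
    TopologicalSpace X := generateFrom {U : Set X | JOpenSet J X U}

/-- `K` is a compact Hausdorff witness for the failure of `A` to be closed. -/
def CGWitness (K : Type v) [tK : TopologicalSpace K] (X : Type u) [TopologicalSpace X]
    (A : Set X) : Prop :=
  CompactSpace K ∧ T2Space K ∧ ∃ f : K → X, Continuous f ∧ ¬ IsClosed (f ⁻¹' A)

/-- `X` is compactly generated. -/
def CompactlyGen.{v', u'} (X : Type u') [TopologicalSpace X] : Prop :=
  ∀ A : Set X, ¬ IsClosed A → ∃ (K : Type v') (tK : TopologicalSpace K), @CGWitness K tK X _ A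

/-- `kX`: `U` is open iff `f ⁻¹ U` is open for every continuous map from a compact
Hausdorff space. -/
def kTop.{v', u'} (X : Type u') [tX : TopologicalSpace X] : TopologicalSpace X :=
  generateFrom {U : Set X |
    ∀ (K : Type v') (tK : TopologicalSpace K), @CompactSpace K tK → @T2Space K tK →
      ∀ f : K → X, Continuous[tK, tX] f → IsOpen[tK] (f ⁻¹' U)}

/-- The directed topology on the successor `J' ∪ {∞} = WithTop J'`: generated by singletons
`{j}` and final segments `(j, ∞]` for `j ∈ J'`. -/
def directedTopology (J' : Type*) [Preorder J'] : TopologicalSpace (WithTop J') :=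
  generateFrom {s : Set (WithTop J') |
    (∃ j : J', s = {WithTop.some j}) ∨ ∃ j : J', s = Ioi (WithTop.some j)}

/-- `J'` witnesses transfinite convergence into `A`. -/
def TransfiniteWitness (J' : Type v) [LinearOrder J'] (X : Type u) [TopologicalSpace X]
    (A : Set X) : Prop :=
  WellFoundedLT J' ∧ Nonempty J' ∧ NoMaxOrder J' ∧
    ∃ f : WithTop J' → X, Continuous[directedTopology J', _] f ∧
      (∀ j : J', f (WithTop.some j) ∈ A) ∧ f ⊤ ∉ A

/-- `X` is a transfinite sequential space. -/
def TransfiniteSequential.{v', u'} (X : Type u') [TopologicalSpace X] : Prop :=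
  ∀ A : Set X, ¬ IsClosed A →
    ∃ (J' : Type v') (lo : LinearOrder J'), @TransfiniteWitness J' lo X _ A

/-- `X` is a `J`-unique convergence space. -/
def JUnique (J : Type v) [LinearOrder J] (X : Type u) [TopologicalSpace X] : Prop :=
  ∀ I : Set J, AlmostClosed I → ∀ f g : WithTop ↥I → X, Continuous f → Continuous g →
    (∀ i : ↥I, f (WithTop.some i) = g (WithTop.some i)) → f = g

/-- The set `M(X,Y)` of continuous maps between spaces with explicitly given topologies. -/
def Cts (X : Type u) (Y : Type w) (tX : TopologicalSpace X) (tY : TopologicalSpace Y) :=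
  {f : X → Y // Continuous[tX, tY] f}

/-- The `𝒥`-open topology on `M(X,Y)`, generated by the sets `W(t,U)`. -/
noncomputable def mjTop (J : Type v) [LinearOrder J] {X : Type u} {Y : Type w}
    (tX : TopologicalSpace X) (tY : TopologicalSpace Y) :
    TopologicalSpace (Cts X Y tX tY) :=
  generateFrom {W : Set (Cts X Y tX tY) |
    ∃ I : Set J, AlmostClosed I ∧ ∃ t : WithTop ↥I → X, Continuous[_, tX] t ∧
      ∃ U : Set Y, IsOpen[tY] U ∧ W = {f | ∀ z : WithTop ↥I, f.1 (t z) ∈ U}}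

open Function

instance withTopOrderTopology_orderTopology {α : Type*} [Preorder α] :
    OrderTopology (WithTop α) := ⟨rfl⟩

/-- Every open set containing `⊤` in `WithTop α` contains a tail. -/
lemma exists_tail_of_isOpen {α : Type*} [LinearOrder α] [Nonempty α]
    {U : Set (WithTop α)} (hU : IsOpen U) (htop : (⊤ : WithTop α) ∈ U) :
    ∃ a : α, ∀ b : α, a < b → (b : WithTop α) ∈ U := by
  have hU' : TopologicalSpace.GenerateOpen
      { s : Set (WithTop α) | ∃ a, s = { b | a < b } ∨ s = { b | b < a } } U := hU
  clear hU
  induction hU' with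
  | basic s hs =>
      obtain ⟨c, hc | hc⟩ := hs
      · subst hc
        cases c with
        | top => exact absurd (show (⊤:WithTop α) < ⊤ from htop) (lt_irrefl _)
        | coe a => exact ⟨a, fun b hb => WithTop.coe_lt_coe.mpr hb⟩
      · subst hc
        exact absurd (show (⊤:WithTop α) < c from htop) not_top_lt
  | univ => exact ⟨Classical.arbitrary α, fun b _ => trivial⟩
  | inter s t _ _ ihs iht =>
      obtain ⟨a₁, h₁⟩ := ihs htop.1
      obtain ⟨a₂, h₂⟩ := iht htop.2
      exact ⟨max a₁ a₂, fun b hb =>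
        ⟨h₁ b (lt_of_le_of_lt (le_max_left _ _) hb), h₂ b (lt_of_le_of_lt (le_max_right _ _) hb)⟩⟩
  | sUnion S _ ih =>
      obtain ⟨s, hsS, hs⟩ := htop
      obtain ⟨a, ha⟩ := ih s hsS hs
      exact ⟨a, fun b hb => ⟨s, hsS, ha b hb⟩⟩

lemma top_mem_closure_range {α : Type*} [LinearOrder α] [Nonempty α]
    (hnm : ∀ a : α, ∃ b : α, a < b) :
    (⊤ : WithTop α) ∈ closure (Set.range (fun a : α => (a : WithTop α))) := by
  rw [mem_closure_iff]
  intro U hU htop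
  obtain ⟨a, ha⟩ := exists_tail_of_isOpen hU htop
  obtain ⟨b, hb⟩ := hnm a
  exact ⟨b, ha b hb, ⟨b, rfl⟩⟩

/-- Closed sets absorb the limit of a probe. -/
lemma probe_top_mem {α : Type*} {W : Type*} [LinearOrder α] [Nonempty α] [TopologicalSpace W]
    (hnm : ∀ a : α, ∃ b : α, a < b)
    {C : Set W} (hC : IsClosed C) {t : WithTop α → W} (ht : Continuous t)
    (h : ∀ a : α, t (a : WithTop α) ∈ C) : t ⊤ ∈ C := by
  have h1 : t ⊤ ∈ closure (t '' Set.range (fun a : α => (a : WithTop α))) :=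
    image_closure_subset_closure_image ht ⟨⊤, top_mem_closure_range hnm, rfl⟩
  have h2 : t '' Set.range (fun a : α => (a : WithTop α)) ⊆ C := by
    rintro _ ⟨_, ⟨a, rfl⟩, rfl⟩; exact h a
  exact hC.closure_subset (closure_mono h2 h1)

section AC
variable {J : Type v} [LinearOrder J] {I : Set J}

lemma AlmostClosed.nonempty (hI : AlmostClosed I) : I.Nonempty := by
  obtain ⟨ℓ, hcl, _⟩ := hI
  by_contra h
  rw [Set.not_nonempty_iff_eq_empty] at h
  subst h
  simp only [Set.image_empty, closure_empty, Set.diff_empty] at hcl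
  exact (Set.singleton_ne_empty ℓ) hcl.symm

lemma AlmostClosed.no_max (hI : AlmostClosed I) : ∀ i ∈ I, ∃ i' ∈ I, i < i' := by
  obtain ⟨ℓ, hcl, hleast⟩ := hI
  intro m hm
  by_contra h
  push_neg at h
  have hℓ : ℓ ∈ closure ((fun j : J => (j : WithTop J)) '' I) \ ((fun j : J => (j : WithTop J)) '' I) := by
    rw [hcl]; rfl
  have hmℓ : ((m : WithTop J)) < ℓ := hleast.1 _ ⟨m, hm, rfl⟩
  have hopen : IsOpen (Ioi (m : WithTop J)) := isOpen_Ioi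
  obtain ⟨y, hy1, hy2⟩ := mem_closure_iff.mp hℓ.1 _ hopen hmℓ
  obtain ⟨i, hiI, rfl⟩ := hy2
  exact absurd (WithTop.coe_lt_coe.mp hy1) (not_lt.mpr (h i hiI))

lemma AlmostClosed.nonempty_coe (hI : AlmostClosed I) : Nonempty ↥I :=
  hI.nonempty.to_subtype

lemma AlmostClosed.no_max_coe (hI : AlmostClosed I) : ∀ a : ↥I, ∃ b : ↥I, a < b := by
  intro a
  obtain ⟨b, hb, hab⟩ := hI.no_max a.1 a.2
  exact ⟨⟨b, hb⟩, Subtype.mk_lt_mk.mpr hab⟩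

end AC

section Cpt

/-- `WithTop α` of a nonempty well-ordered set is compact. -/
lemma compactSpace_withTop {α : Type*} [LinearOrder α] [WellFoundedLT α] [Nonempty α] :
    CompactSpace (WithTop α) := by
  letI : OrderBot α :=
    { bot := wellFounded_lt.min Set.univ ⟨Classical.arbitrary α, trivial⟩,
      bot_le := fun b => not_lt.mp (wellFounded_lt.not_lt_min Set.univ trivial) }
  letI : ConditionallyCompleteLinearOrderBot (WithTop α) :=
    WellFoundedLT.conditionallyCompleteLinearOrderBot (WithTop α)
  refine ⟨?_⟩
  rw [← Icc_bot_top]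
  exact isCompact_Icc

end Cpt

section NJ
variable {J : Type v} [LinearOrder J] [WellFoundedLT J] [TopologicalSpace J]
  [OrderTopology J] [NoncompactSpace J]

lemma nonempty_of_noncompact : Nonempty J := by
  by_contra h
  rw [not_nonempty_iff] at h
  exact NoncompactSpace.noncompact_univ (X := J)
    (by rw [Set.univ_eq_empty_iff.mpr h]; exact isCompact_empty)

lemma no_max_of_noncompact : ∀ a : J, ∃ b : J, a < b := by
  have hne : Nonempty J := nonempty_of_noncompact
  by_contra h
  push_neg at h
  obtain ⟨m, hm⟩ := h
  letI : OrderTop J := { top := m, le_top := fun b => hm b }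
  letI : OrderBot J :=
    { bot := wellFounded_lt.min Set.univ ⟨Classical.arbitrary J, trivial⟩,
      bot_le := fun b => not_lt.mp (wellFounded_lt.not_lt_min Set.univ trivial) }
  letI : BoundedOrder J := {}
  letI : ConditionallyCompleteLinearOrderBot J :=
    WellFoundedLT.conditionallyCompleteLinearOrderBot J
  exact NoncompactSpace.noncompact_univ (X := J) (by rw [← Icc_bot_top]; exact isCompact_Icc)

lemma almostClosed_univ : AlmostClosed (Set.univ : Set J) := by
  have hne : Nonempty J := nonempty_of_noncompact
  refine ⟨⊤, ?_, ?_, ?_⟩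
  · rw [Set.image_univ]
    apply Set.eq_singleton_iff_unique_mem.mpr
    constructor
    · constructor
      · exact top_mem_closure_range no_max_of_noncompact
      · rintro ⟨a, ha⟩
        exact WithTop.coe_ne_top ha
    · rintro x ⟨-, hx⟩
      cases x with
      | top => rfl
      | coe a => exact absurd ⟨a, rfl⟩ hx
  · rintro _ ⟨a, -, rfl⟩
    exact WithTop.coe_lt_top a
  · rintro s hs
    cases s with
    | top => exact le_refl _
    | coe j => exact absurd (hs _ ⟨j, trivial, rfl⟩) (lt_irrefl _)
end NJ

section Whitehead
variable {K : Type*} {Z : Type*} {W : Type*}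
  [TopologicalSpace K] [TopologicalSpace Z] [TopologicalSpace W]

lemma quotient_isClosed_of_preimage {f : Z → W} (h : IsQuotientMap f) {C : Set W}
    (hC : IsClosed (f ⁻¹' C)) : IsClosed C :=
  h.isClosed_preimage.mp hC

lemma isQuotientMap_of_closed {f : Z → W} (hcont : Continuous f) (hsurj : Surjective f)
    (h : ∀ C : Set W, IsClosed (f ⁻¹' C) → IsClosed C) : IsQuotientMap f := by
  rw [isQuotientMap_iff_isClosed]
  exact ⟨hsurj, fun s => ⟨fun hs => hs.preimage hcont, fun hs => h s hs⟩⟩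

/-- Whitehead's theorem: `id × p` is a quotient map when the first factor is
compact Hausdorff (hence locally compact). -/
theorem whitehead_right [CompactSpace K] [T2Space K] {p : Z → W} (hp : IsQuotientMap p) :
    IsQuotientMap (Prod.map (id : K → K) p) := by
  refine (isQuotientMap_iff _).mpr ⟨isCoinducing_iff.mpr fun U =>
    ⟨fun hV => ?_, fun hU => hU.preimage (continuous_id.prodMap hp.continuous)⟩,
    surjective_id.prodMap hp.surjective⟩
  rw [isOpen_iff_mem_nhds]
  rintro ⟨k₀, w₀⟩ hkw
  obtain ⟨z₀, rfl⟩ := hp.surjective w₀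
  have hz : (k₀, z₀) ∈ Prod.map (id : K → K) p ⁻¹' U := hkw
  obtain ⟨N, O, hN, hO, hk₀, hz₀, hNO⟩ := isOpen_prod_iff.mp hV k₀ z₀ hz
  obtain ⟨L, hLmem, hLN, hLc⟩ := local_compact_nhds (hN.mem_nhds hk₀)
  set T : Set W := {w : W | ∀ k ∈ L, (k, w) ∈ U} with hT
  have hTopen : IsOpen T := by
    rw [← hp.isOpen_preimage]
    have hpre : p ⁻¹' T = {z : Z | ∀ k ∈ L, (k, z) ∈ Prod.map (id : K → K) p ⁻¹' U} := rfl
    rw [hpre, isOpen_iff_mem_nhds]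
    intro z hzT
    obtain ⟨u, v, hu, hv, hLu, hzv, huv⟩ := generalized_tube_lemma hLc isCompact_singleton hV
      (by rintro ⟨k, z'⟩ ⟨hk, hz'⟩
          rcases hz' with rfl
          exact hzT k hk)
    exact Filter.mem_of_superset (hv.mem_nhds (hzv rfl))
      (fun z' hz' k hk => huv ⟨hLu hk, hz'⟩)
  have hw₀T : p z₀ ∈ T := by
    intro k hk
    have h := hNO (show (k, z₀) ∈ N ×ˢ O from ⟨hLN hk, hz₀⟩)
    simpa [Prod.map] using h
  have hsub : L ×ˢ T ⊆ U := by
    rintro ⟨k, w⟩ ⟨hk, hw⟩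
    exact hw k hk
  exact Filter.mem_of_superset (prod_mem_nhds hLmem (hTopen.mem_nhds hw₀T)) hsub

theorem whitehead_left [CompactSpace K] [T2Space K] {p : Z → W} (hp : IsQuotientMap p) :
    IsQuotientMap (Prod.map p (id : K → K)) := by
  have h1 : IsQuotientMap (Prod.map (id : K → K) p) := whitehead_right hp
  have heq : Prod.map p (id : K → K) =
      (Homeomorph.prodComm K W) ∘ (Prod.map (id : K → K) p) ∘ (Homeomorph.prodComm Z K) := by
    ext ⟨z, k⟩ <;> rfl
  rw [heq]
  exact ((Homeomorph.prodComm K W).isQuotientMap.comp h1).comp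
    (Homeomorph.prodComm Z K).isQuotientMap

end Whitehead

section Probes
variable (J : Type v) [LinearOrder J] (X' : Type u) [TopologicalSpace X']

/-- The index of all probes into `X'`. -/
abbrev ProbeIdx := Σ I : Set J, {t : WithTop ↥I → X' // AlmostClosed I ∧ Continuous t}

/-- The disjoint sum of the domains of all probes into `X'`. -/
abbrev ProbeTot := Σ p : ProbeIdx J X', WithTop ↥p.1

/-- Evaluation of all probes. -/
def probeEval : ProbeTot J X' → X' := fun s => s.1.2.1 s.2

lemma continuous_probeEval : Continuous (probeEval J X') :=
  continuous_sigma fun p => p.2.2.2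

end Probes

lemma isQuotientMap_probeEval {J : Type v} [LinearOrder J] [WellFoundedLT J]
    [TopologicalSpace J] [OrderTopology J] [NoncompactSpace J]
    {X' : Type u} [TopologicalSpace X'] (hX' : IsJConvergence J X') :
    IsQuotientMap (probeEval J X') := by
  apply isQuotientMap_of_closed (continuous_probeEval J X')
  · intro x'
    exact ⟨⟨⟨Set.univ, ⟨fun _ => x', almostClosed_univ, continuous_const⟩⟩, ⊤⟩, rfl⟩
  · intro C hC
    by_contra hCc
    obtain ⟨I, hI, t, ht, htC, htop⟩ := hX' C hCc
    have hslice : IsClosed (t ⁻¹' C) :=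
      (isClosed_sigma_iff.mp hC) ⟨I, ⟨t, hI, ht⟩⟩
    haveI : Nonempty ↥I := hI.nonempty_coe
    exact htop (probe_top_mem (t := id) hI.no_max_coe hslice continuous_id (fun i => htC i))

-- STATEMENT 10
theorem stmt10 {J : Type v} [LinearOrder J] [WellFoundedLT J] [TopologicalSpace J]
    [OrderTopology J] [NoncompactSpace J] {X X' Y Y' : Type u}
    [TopologicalSpace X] [TopologicalSpace X'] [TopologicalSpace Y] [TopologicalSpace Y']
    (hX : IsJConvergence J X) (hX' : IsJConvergence J X')
    (hXX' : IsJConvergence J (X × X'))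
    (q : X → Y) (q' : X' → Y') (hq : IsQuotientMap q) (hq' : IsQuotientMap q') :
    IsQuotientMap (Prod.map q q') ↔ IsJConvergence J (Y × Y') := by
  constructor
  · -- quotient map ⇒ the codomain product is a J-convergence space
    intro hqq A hA
    have hpre : ¬ IsClosed (Prod.map q q' ⁻¹' A) := fun h => hA (quotient_isClosed_of_preimage hqq h)
    obtain ⟨I, hI, w, hw, hwA, hwt⟩ := hXX' _ hpre
    exact ⟨I, hI, (Prod.map q q') ∘ w,
      (hq.continuous.prodMap hq'.continuous).comp hw, fun i => hwA i, hwt⟩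
  · -- J-convergence of `Y × Y'` ⇒ quotient
    intro hYY'
    refine isQuotientMap_of_closed (hq.continuous.prodMap hq'.continuous)
      (hq.surjective.prodMap hq'.surjective) ?_
    intro A hB
    by_contra hA
    obtain ⟨I, hI, f, hf, hfA, hft⟩ := hYY' A hA
    haveI : Nonempty ↥I := hI.nonempty_coe
    haveI : CompactSpace (WithTop ↥I) := compactSpace_withTop
    have hgc : Continuous (fun k : WithTop ↥I => (f k).1) := continuous_fst.comp hf
    have hg'c : Continuous (fun k : WithTop ↥I => (f k).2) := continuous_snd.comp hf
    -- Step 1: the set C₂ = {(k,x') | (g k, q' x') ∈ A} is closed in K × X'.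
    have hC2 : IsClosed {r : WithTop ↥I × X' | ((f r.1).1, q' r.2) ∈ A} := by
      have hΨ : IsQuotientMap (Prod.map (id : WithTop ↥I → WithTop ↥I) (probeEval J X')) :=
        whitehead_right (isQuotientMap_probeEval hX')
      apply quotient_isClosed_of_preimage hΨ
      set D : Set (Σ p : ProbeIdx J X', WithTop ↥p.1 × WithTop ↥I) :=
        {s | ((f s.2.2).1, q' (s.1.2.1 s.2.1)) ∈ A} with hD
      have hDclosed : IsClosed D := by
        rw [isClosed_sigma_iff]
        rintro ⟨I', t, hI', ht⟩
        haveI : Nonempty ↥I' := hI'.nonempty_coe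
        haveI : CompactSpace (WithTop ↥I') := compactSpace_withTop
        have h8 : IsClosed {r : Y × WithTop ↥I' | (r.1, q' (t r.2)) ∈ A} := by
          have hwl : IsQuotientMap (Prod.map q (id : WithTop ↥I' → WithTop ↥I')) :=
            whitehead_left hq
          apply quotient_isClosed_of_preimage hwl
          have heq : Prod.map q (id : WithTop ↥I' → WithTop ↥I') ⁻¹'
                {r : Y × WithTop ↥I' | (r.1, q' (t r.2)) ∈ A}
              = (fun s : X × WithTop ↥I' => (s.1, t s.2)) ⁻¹' (Prod.map q q' ⁻¹' A) := rfl
          rw [heq]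
          exact hB.preimage (continuous_fst.prodMk (ht.comp continuous_snd))
        have heq2 : (Sigma.mk (⟨I', ⟨t, hI', ht⟩⟩ : ProbeIdx J X') ⁻¹' D)
            = (fun r : WithTop ↥I' × WithTop ↥I => ((f r.2).1, r.1)) ⁻¹'
                {r : Y × WithTop ↥I' | (r.1, q' (t r.2)) ∈ A} := rfl
        rw [heq2]
        exact h8.preimage ((hgc.comp continuous_snd).prodMk continuous_fst)
      have key : Prod.map (id : WithTop ↥I → WithTop ↥I) (probeEval J X') ⁻¹'
            {r : WithTop ↥I × X' | ((f r.1).1, q' r.2) ∈ A}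
          = (fun r : WithTop ↥I × ProbeTot J X' =>
              ((Homeomorph.sigmaProdDistrib (X := fun p : ProbeIdx J X' => WithTop ↥p.1)
                (Y := WithTop ↥I)) ((Homeomorph.prodComm _ _) r))) ⁻¹' D := by
        ext ⟨k, ⟨p, w⟩⟩
        rfl
      rw [key]
      exact hDclosed.preimage ((Homeomorph.sigmaProdDistrib (X := fun p : ProbeIdx J X' => WithTop ↥p.1)
        (Y := WithTop ↥I)).continuous.comp (Homeomorph.prodComm _ _).continuous)
    -- Step 2: push through id × q' (Whitehead again).
    have hA3 : IsClosed {r : WithTop ↥I × Y' | ((f r.1).1, r.2) ∈ A} := by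
      have hwr : IsQuotientMap (Prod.map (id : WithTop ↥I → WithTop ↥I) q') :=
        whitehead_right hq'
      exact quotient_isClosed_of_preimage hwr hC2
    -- Step 3: evaluate along the diagonal.
    have hδ : Continuous (fun k : WithTop ↥I => ((k, (f k).2) : WithTop ↥I × Y')) :=
      continuous_id.prodMk hg'c
    have hfin : ((⊤ : WithTop ↥I), (f ⊤).2) ∈ {r : WithTop ↥I × Y' | ((f r.1).1, r.2) ∈ A} :=
      probe_top_mem hI.no_max_coe hA3 hδ (fun i => by simpa using hfA i)
    exact hft (by simpa using hfin)
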